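/- Partial GCD Algorithm I correctness: if deg Λ_τ ≤ (N − K − deg Λ_ρ)/2, then running the extended Euclidean algorithm on M_n(x) and Ŷ(x) = Λ_ρ(x)Y(x) with stopping criterion deg r < deg t + deg Λ_ρ + K produces the same s(x), t(x) as the algorithm run on M_n(x) and Ê(x) = Λ_ρ(x)E(x) until deg r = 0; moreover the returned remainder satisfies r(x) = t(x)Λ_ρ(x)a(x). -/

import Mathlib

open Polynomial

open scoped Classical

/-- State of the extended GCD algorithm: `(r, r̃, s, s̃, t, t̃)`. -/
structure GcdState (F : Type*) [Field F] where
  r : F[X]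
  rt : F[X]
  s : F[X]
  st : F[X]
  t : F[X]
  tt : F[X]

/-- One outer iteration of the extended GCD algorithm. -/
noncomputable def gcdStep {F : Type*} [Field F] (σ : GcdState F) : GcdState F :=
  let q := σ.r / σ.rt
  ⟨σ.rt, σ.r - q * σ.rt, σ.st, σ.s - q * σ.st, σ.tt, σ.t - q * σ.tt⟩

/-- The state of the extended GCD algorithm on inputs `a, b` after `j` outer
iterations, starting from `(a, b, 1, 0, 0, 1)`. -/
noncomputable def gcdRun {F : Type*} [Field F] (a b : F[X]) (j : ℕ) : GcdState F :=
  gcdStep^[j] ⟨a, b, 1, 0, 0, 1⟩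

section Aux

variable {F : Type*} [Field F]

lemma gcdRun_succ' (a b : F[X]) (j : ℕ) :
    gcdRun a b (j + 1) = gcdStep (gcdRun a b j) := by
  simp [gcdRun, Function.iterate_succ_apply']

@[simp] lemma gcdStep_r (σ : GcdState F) : (gcdStep σ).r = σ.rt := rfl
@[simp] lemma gcdStep_rt (σ : GcdState F) :
    (gcdStep σ).rt = σ.r - σ.r / σ.rt * σ.rt := rfl
@[simp] lemma gcdStep_s (σ : GcdState F) : (gcdStep σ).s = σ.st := rfl
@[simp] lemma gcdStep_st (σ : GcdState F) :
    (gcdStep σ).st = σ.s - σ.r / σ.rt * σ.st := rfl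
@[simp] lemma gcdStep_t (σ : GcdState F) : (gcdStep σ).t = σ.tt := rfl
@[simp] lemma gcdStep_tt (σ : GcdState F) :
    (gcdStep σ).tt = σ.t - σ.r / σ.rt * σ.tt := rfl

lemma div_eq_of_aux {a b q r : F[X]} (hb : b ≠ 0) (h : a = q * b + r)
    (hr : r.degree < b.degree) : a / b = q := by
  by_contra hne
  have h2 : b * (a / b) + a % b = a := EuclideanDomain.div_add_mod a b
  have hmod : (a % b).degree < b.degree := EuclideanDomain.mod_lt _ hb
  have key : (q - a / b) * b = a % b - r := by
    have h3 : q * b + r = b * (a / b) + a % b := by rw [← h, h2]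
    linear_combination h3
  have h4 : b.degree ≤ ((q - a / b) * b).degree := by
    rw [degree_mul]
    have h5 : (0 : WithBot ℕ) ≤ (q - a / b).degree :=
      zero_le_degree_iff.mpr (sub_ne_zero.mpr (fun hh => hne hh.symm))
    exact le_add_of_nonneg_left h5
  have h6 : ((q - a / b) * b).degree < b.degree := by
    rw [key]; exact lt_of_le_of_lt (degree_sub_le _ _) (max_lt hmod hr)
  exact absurd (lt_of_le_of_lt h4 h6) (lt_irrefl _)

/-- The invariant carried through the joint induction on the two runs. -/
structure EuInv (M B c : F[X]) (τ δ : ℕ) (j : ℕ) (e y : GcdState F) : Prop where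
  hr : e.r = e.s * M + e.t * B
  hrt : e.rt = e.st * M + e.tt * B
  hdet : e.r * e.tt - e.rt * e.t = (-1) ^ j * M
  ht : e.t.degree ≤ ((τ : ℕ) : WithBot ℕ)
  htt : e.tt.degree ≤ ((τ : ℕ) : WithBot ℕ)
  hr0 : e.r ≠ 0
  hrdeg : ((δ : ℕ) : WithBot ℕ) ≤ e.r.degree
  hs : y.s = e.s
  hst : y.st = e.st
  hteq : y.t = e.t
  htteq : y.tt = e.tt
  hyr : y.r = e.r + e.t * c
  hyrt : y.rt = e.rt + e.tt * c

lemma euInv_zero {M B c : F[X]} {τ δ : ℕ}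
    (hM0 : M ≠ 0) (hMdeg : ((δ : ℕ) : WithBot ℕ) ≤ M.degree) :
    EuInv M B c τ δ 0 ⟨M, B, 1, 0, 0, 1⟩ ⟨M, B + c, 1, 0, 0, 1⟩ := by
  refine ⟨by ring, by ring, by ring, ?_, ?_, hM0, hMdeg, rfl, rfl, rfl, rfl, by ring, by ring⟩
  · simp
  · rw [degree_one]
    exact_mod_cast Nat.zero_le τ

lemma euInv_step {M B c : F[X]} {τ δ : ℕ}
    (hMdeg : M.degree ≤ (((τ + δ : ℕ)) : WithBot ℕ))
    (hkey : ∀ u : F[X], u.degree ≤ ((τ : ℕ) : WithBot ℕ) →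
      (u * c).degree < ((δ : ℕ) : WithBot ℕ))
    {j : ℕ} {e y : GcdState F} (h : EuInv M B c τ δ j e y)
    (hrt0 : e.rt ≠ 0) (hrtdeg : ((δ : ℕ) : WithBot ℕ) ≤ e.rt.degree) :
    EuInv M B c τ δ (j + 1) (gcdStep e) (gcdStep y) := by
  set q := e.r / e.rt with hqdef
  have hrem : (e.r - q * e.rt).degree < e.rt.degree := by
    have hm : e.r % e.rt = e.r - e.rt * (e.r / e.rt) :=
      EuclideanDomain.mod_eq_sub_mul_div _ _
    have h2 : (e.r % e.rt).degree < e.rt.degree := EuclideanDomain.mod_lt e.r hrt0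
    rw [hm] at h2
    simpa [hqdef, mul_comm] using h2
  have hrtne : e.rt.degree ≠ ⊥ := by
    simp [degree_eq_bot, hrt0]
  -- determinant at step j+1
  have hdet' : e.rt * (e.t - q * e.tt) - (e.r - q * e.rt) * e.tt = (-1) ^ (j + 1) * M := by
    have hh : e.rt * (e.t - q * e.tt) - (e.r - q * e.rt) * e.tt
        = -(e.r * e.tt - e.rt * e.t) := by ring
    rw [hh, h.hdet, pow_succ]; ring
  -- degree bound on the new tt
  have htt' : (e.t - q * e.tt).degree ≤ ((τ : ℕ) : WithBot ℕ) := by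
    by_cases hu : e.t - q * e.tt = 0
    · simp [hu]
    · have hid : e.rt * (e.t - q * e.tt) = (-1) ^ (j + 1) * M + (e.r - q * e.rt) * e.tt := by
        linear_combination hdet'
      have hdM : ((-1 : F[X]) ^ (j + 1) * M).degree ≤ e.rt.degree + ((τ : ℕ) : WithBot ℕ) := by
        have h1 : ((-1 : F[X]) ^ (j + 1) * M).degree = M.degree := by
          rw [degree_mul, degree_pow, degree_neg, degree_one]
          simp
        rw [h1]
        calc M.degree ≤ (((τ + δ : ℕ)) : WithBot ℕ) := hMdeg
          _ = ((δ : ℕ) : WithBot ℕ) + ((τ : ℕ) : WithBot ℕ) := by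
              rw [← Nat.cast_add, Nat.add_comm]
          _ ≤ e.rt.degree + ((τ : ℕ) : WithBot ℕ) := add_le_add hrtdeg le_rfl
      have hd2 : ((e.r - q * e.rt) * e.tt).degree ≤ e.rt.degree + ((τ : ℕ) : WithBot ℕ) := by
        rw [degree_mul]
        exact add_le_add (le_of_lt hrem) h.htt
      have hsum : (e.rt * (e.t - q * e.tt)).degree ≤ e.rt.degree + ((τ : ℕ) : WithBot ℕ) := by
        rw [hid]
        exact le_trans (degree_add_le _ _) (max_le hdM hd2)
      rw [degree_mul] at hsum
      exact (WithBot.add_le_add_iff_left hrtne).mp hsum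
  -- the Y-side quotient agrees
  have h1 : (e.tt * c).degree < e.rt.degree := lt_of_lt_of_le (hkey _ h.htt) hrtdeg
  have hdegyrt : y.rt.degree = e.rt.degree := by
    rw [h.hyrt]; exact degree_add_eq_left_of_degree_lt h1
  have hyrt0 : y.rt ≠ 0 := by
    intro hz
    rw [hz, degree_zero] at hdegyrt
    exact hrtne hdegyrt.symm
  have h2 : ((e.t - q * e.tt) * c).degree < e.rt.degree :=
    lt_of_lt_of_le (hkey _ htt') hrtdeg
  have hq : y.r / y.rt = q := by
    refine div_eq_of_aux (r := (e.r - q * e.rt) + (e.t - q * e.tt) * c) hyrt0 ?_ ?_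
    · rw [h.hyr, h.hyrt]; ring
    · rw [hdegyrt]
      exact lt_of_le_of_lt (degree_add_le _ _) (max_lt hrem h2)
  refine ⟨?_, ?_, ?_, ?_, ?_, ?_, ?_, ?_, ?_, ?_, ?_, ?_, ?_⟩
  · simpa using h.hrt
  · show e.r - q * e.rt = (e.s - q * e.st) * M + (e.t - q * e.tt) * B
    linear_combination h.hr - q * h.hrt
  · simpa using hdet'
  · simpa using h.htt
  · simpa using htt'
  · simpa using hrt0
  · simpa using hrtdeg
  · show y.st = e.st
    exact h.hst
  · show y.s - y.r / y.rt * y.st = e.s - q * e.st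
    rw [hq, h.hs, h.hst]
  · show y.tt = e.tt
    exact h.htteq
  · show y.t - y.r / y.rt * y.tt = e.t - q * e.tt
    rw [hq, h.hteq, h.htteq]
  · show y.rt = e.rt + e.tt * c
    exact h.hyrt
  · show y.r - y.r / y.rt * y.rt = (e.r - q * e.rt) + (e.t - q * e.tt) * c
    rw [hq, h.hyr, h.hyrt]; ring

end Aux

theorem stmt_15 {F : Type*} [Field F] (n : ℕ)
    (m : Fin n → F[X]) (hm : ∀ i, (m i).Monic) (hirr : ∀ i, Irreducible (m i))
    (hinj : Function.Injective m)
    (N K : ℕ) (hN : N = (∏ i, m i).natDegree)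
    (a : F[X]) (ha : a.degree < (K : WithBot ℕ))
    (E : F[X]) (hE0 : E ≠ 0) (hEdeg : E.degree < (∏ i, m i).degree)
    (Sρ Sτ : Finset (Fin n)) (hdisj : Disjoint Sρ Sτ)
    (hsupp : Finset.univ.filter (fun i => ¬ m i ∣ E) = Sρ ∪ Sτ)
    (hbound : 2 * (∏ i ∈ Sτ, m i).natDegree + K + (∏ i ∈ Sρ, m i).natDegree ≤ N)
    (jE jY : ℕ)
    (hstopE : (gcdRun (∏ i, m i) ((∏ i ∈ Sρ, m i) * E) jE).rt.degree ≤ 0)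
    (hfirstE : ∀ j < jE, ¬ (gcdRun (∏ i, m i) ((∏ i ∈ Sρ, m i) * E) j).rt.degree ≤ 0)
    (hstopY : (gcdRun (∏ i, m i) ((∏ i ∈ Sρ, m i) * (a + E)) jY).rt.degree <
      (gcdRun (∏ i, m i) ((∏ i ∈ Sρ, m i) * (a + E)) jY).tt.degree +
        (((∏ i ∈ Sρ, m i).natDegree + K : ℕ) : WithBot ℕ))
    (hfirstY : ∀ j < jY,
      ¬ (gcdRun (∏ i, m i) ((∏ i ∈ Sρ, m i) * (a + E)) j).rt.degree <
        (gcdRun (∏ i, m i) ((∏ i ∈ Sρ, m i) * (a + E)) j).tt.degree +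
          (((∏ i ∈ Sρ, m i).natDegree + K : ℕ) : WithBot ℕ)) :
    jY = jE ∧
    (gcdRun (∏ i, m i) ((∏ i ∈ Sρ, m i) * (a + E)) jY).st =
      (gcdRun (∏ i, m i) ((∏ i ∈ Sρ, m i) * E) jE).st ∧
    (gcdRun (∏ i, m i) ((∏ i ∈ Sρ, m i) * (a + E)) jY).tt =
      (gcdRun (∏ i, m i) ((∏ i ∈ Sρ, m i) * E) jE).tt ∧
    (gcdRun (∏ i, m i) ((∏ i ∈ Sρ, m i) * (a + E)) jY).rt =
      (gcdRun (∏ i, m i) ((∏ i ∈ Sρ, m i) * (a + E)) jY).tt * (∏ i ∈ Sρ, m i) * a := by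
  have hBc : (∏ i ∈ Sρ, m i) * (a + E) = (∏ i ∈ Sρ, m i) * E + (∏ i ∈ Sρ, m i) * a := by
    ring
  rw [hBc] at hstopY hfirstY ⊢
  set M : F[X] := ∏ i, m i with hMdef
  set Λρ : F[X] := ∏ i ∈ Sρ, m i with hLρdef
  set Λτ : F[X] := ∏ i ∈ Sτ, m i with hLτdef
  set B : F[X] := Λρ * E with hBdef
  set c : F[X] := Λρ * a with hcdef
  set P : F[X] := ∏ i ∈ (Sρ ∪ Sτ)ᶜ, m i with hPdef
  set G : F[X] := Λρ * P with hGdef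
  set τ := Λτ.natDegree with hτdef
  set ρ := Λρ.natDegree with hρdef
  set δ := G.natDegree with hδdef
  have hmonΛρ : Λρ.Monic := monic_prod_of_monic _ _ fun i _ => hm i
  have hmonΛτ : Λτ.Monic := monic_prod_of_monic _ _ fun i _ => hm i
  have hmonP : P.Monic := monic_prod_of_monic _ _ fun i _ => hm i
  have hmonM : M.Monic := monic_prod_of_monic _ _ fun i _ => hm i
  have hmonG : G.Monic := hmonΛρ.mul hmonP
  have hMdecomp : M = Λτ * G := by
    rw [hMdef, ← Finset.prod_mul_prod_compl (Sρ ∪ Sτ) m, Finset.prod_union hdisj,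
      hGdef, hLρdef, hLτdef, hPdef]
    ring
  have hNτδ : N = τ + δ := by
    rw [hN, hMdecomp, natDegree_mul hmonΛτ.ne_zero hmonG.ne_zero]
  have hN1 : 1 ≤ N := by
    have h0 : (0 : WithBot ℕ) < M.degree :=
      lt_of_le_of_lt (zero_le_degree_iff.mpr hE0) hEdeg
    have := natDegree_pos_iff_degree_pos.mpr h0
    omega
  have hτρK : τ + (ρ + K) ≤ δ ∧ 1 ≤ δ := by omega
  -- coprimality and divisibility facts
  have hcop : ∀ i j : Fin n, i ≠ j → IsCoprime (m i) (m j) := by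
    intro i j hij
    refine (hirr i).coprime_iff_not_dvd.mpr fun hdvd => hij ?_
    exact hinj
      (eq_of_monic_of_associated (hm i) (hm j) ((hirr i).associated_of_dvd (hirr j) hdvd))
  have hPdvdE : P ∣ E := by
    refine Finset.prod_dvd_of_coprime ?_ ?_
    · intro i _ j _ hij
      exact hcop i j hij
    · intro i hi
      by_contra hnd
      have hmem : i ∈ Finset.univ.filter (fun i => ¬ m i ∣ E) :=
        Finset.mem_filter.mpr ⟨Finset.mem_univ _, hnd⟩
      rw [hsupp] at hmem
      exact (Finset.mem_compl.mp hi) hmem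
  have hGdvdM : G ∣ M := hMdecomp ▸ dvd_mul_left G Λτ
  have hGdvdB : G ∣ B := mul_dvd_mul_left Λρ hPdvdE
  have hGdeg : G.degree = ((δ : ℕ) : WithBot ℕ) := degree_eq_natDegree hmonG.ne_zero
  have hMdegN : M.degree = (((τ + δ : ℕ)) : WithBot ℕ) := by
    rw [degree_eq_natDegree hmonM.ne_zero, ← hN, hNτδ]
  -- the key degree bound
  have hc : c.degree < ((ρ + K : ℕ) : WithBot ℕ) := by
    rcases eq_or_ne a 0 with ha0 | ha0
    · rw [hcdef, ha0, mul_zero, degree_zero]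
      exact_mod_cast WithBot.bot_lt_coe (ρ + K)
    · rw [hcdef, degree_mul, degree_eq_natDegree hmonΛρ.ne_zero, ← hρdef]
      have hcast : ((ρ + K : ℕ) : WithBot ℕ) = ((ρ : ℕ) : WithBot ℕ) + ((K : ℕ) : WithBot ℕ) := by
        push_cast; ring
      rw [hcast]
      exact WithBot.add_lt_add_left (by exact_mod_cast WithBot.coe_ne_bot) ha
  have hkey : ∀ u : F[X], u.degree ≤ ((τ : ℕ) : WithBot ℕ) →
      (u * c).degree < ((δ : ℕ) : WithBot ℕ) := by
    intro u hu
    rcases eq_or_ne u 0 with h0 | h0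
    · rw [h0, zero_mul, degree_zero]
      exact_mod_cast WithBot.bot_lt_coe δ
    rcases eq_or_ne c 0 with hc0 | hc0
    · rw [hc0, mul_zero, degree_zero]
      exact_mod_cast WithBot.bot_lt_coe δ
    have hud : u.degree = (u.natDegree : WithBot ℕ) := degree_eq_natDegree h0
    have hcd : c.degree = (c.natDegree : WithBot ℕ) := degree_eq_natDegree hc0
    rw [degree_mul, hud, hcd, ← Nat.cast_add]
    rw [hud] at hu
    have hcc := hc
    rw [hcd] at hcc
    have h1 : u.natDegree ≤ τ := by exact_mod_cast hu
    have h2 : c.natDegree < ρ + K := by exact_mod_cast hcc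
    have h3 : u.natDegree + c.natDegree < δ := by omega
    exact_mod_cast h3
  -- the joint induction
  have hGrt : ∀ j (e y : GcdState F), EuInv M B c τ δ j e y → G ∣ e.rt := by
    intro j e y h
    rw [h.hrt]
    exact dvd_add (hGdvdM.mul_left _) (hGdvdB.mul_left _)
  have main : ∀ j, j ≤ jE → EuInv M B c τ δ j (gcdRun M B j) (gcdRun M (B + c) j) := by
    intro j
    induction j with
    | zero =>
      intro _
      have hz : ((δ : ℕ) : WithBot ℕ) ≤ M.degree := by
        rw [hMdegN]
        exact_mod_cast Nat.le_add_left δ τ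
      exact euInv_zero hmonM.ne_zero hz
    | succ j ih =>
      intro hj
      have hjlt : j < jE := hj
      have h := ih (le_of_lt hjlt)
      have hrt0 : (gcdRun M B j).rt ≠ 0 := by
        intro h0
        exact hfirstE j hjlt (by rw [h0, degree_zero]; exact bot_le)
      have hrtdeg : ((δ : ℕ) : WithBot ℕ) ≤ (gcdRun M B j).rt.degree := by
        rw [← hGdeg]
        exact degree_le_of_dvd (hGrt j _ _ h) hrt0
      rw [gcdRun_succ', gcdRun_succ']
      exact euInv_step (le_of_eq hMdegN) hkey h hrt0 hrtdeg
  have hE := main jE le_rfl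
  have hrtE0 : (gcdRun M B jE).rt = 0 := by
    by_contra h0
    have hdd := degree_le_of_dvd (hGrt _ _ _ hE) h0
    rw [hGdeg] at hdd
    have h2 : ((δ : ℕ) : WithBot ℕ) ≤ 0 := le_trans hdd hstopE
    have h3 : δ ≤ 0 := by exact_mod_cast h2
    omega
  have httE0 : (gcdRun M B jE).tt ≠ 0 := by
    intro h0
    have hd := hE.hdet
    rw [h0, hrtE0, mul_zero, zero_mul, sub_zero] at hd
    have hne : ((-1 : F[X]) ^ jE * M) ≠ 0 :=
      mul_ne_zero (pow_ne_zero _ (by simp)) hmonM.ne_zero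
    exact hne hd.symm
  have hstopAtE : (gcdRun M (B + c) jE).rt.degree <
      (gcdRun M (B + c) jE).tt.degree + ((ρ + K : ℕ) : WithBot ℕ) := by
    rw [hE.hyrt, hrtE0, zero_add, hE.htteq]
    rcases eq_or_ne c 0 with hc0 | hc0
    · rw [hc0, mul_zero, degree_zero, degree_eq_natDegree httE0, ← Nat.cast_add]
      exact_mod_cast WithBot.bot_lt_coe _
    · rw [degree_mul]
      refine WithBot.add_lt_add_left ?_ hc
      rw [degree_eq_natDegree httE0]
      exact_mod_cast WithBot.coe_ne_bot
  have hnostop : ∀ j, j < jE → ¬ (gcdRun M (B + c) j).rt.degree <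
      (gcdRun M (B + c) j).tt.degree + ((ρ + K : ℕ) : WithBot ℕ) := by
    intro j hj
    have h := main j (le_of_lt hj)
    have hrt0 : (gcdRun M B j).rt ≠ 0 := fun h0 =>
      hfirstE j hj (by rw [h0, degree_zero]; exact bot_le)
    have hrtdeg : ((δ : ℕ) : WithBot ℕ) ≤ (gcdRun M B j).rt.degree := by
      rw [← hGdeg]
      exact degree_le_of_dvd (hGrt _ _ _ h) hrt0
    have hdegy : (gcdRun M (B + c) j).rt.degree = (gcdRun M B j).rt.degree := by
      rw [h.hyrt]
      exact degree_add_eq_left_of_degree_lt (lt_of_lt_of_le (hkey _ h.htt) hrtdeg)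
    rw [not_lt, hdegy, h.htteq]
    calc (gcdRun M B j).tt.degree + ((ρ + K : ℕ) : WithBot ℕ)
        ≤ ((τ : ℕ) : WithBot ℕ) + ((ρ + K : ℕ) : WithBot ℕ) := add_le_add h.htt le_rfl
      _ = ((τ + (ρ + K) : ℕ) : WithBot ℕ) := by push_cast; ring
      _ ≤ ((δ : ℕ) : WithBot ℕ) := by exact_mod_cast hτρK.1
      _ ≤ _ := hrtdeg
  have hJ : jY = jE := by
    rcases lt_trichotomy jY jE with h | h | h
    · exact absurd hstopY (hnostop jY h)
    · exact h
    · exact absurd hstopAtE (hfirstY jE h)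
  subst hJ
  refine ⟨rfl, hE.hst, hE.htteq, ?_⟩
  rw [hE.hyrt, hrtE0, zero_add, hE.htteq, hcdef]
  ring
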